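/- Suppose f : ℝ^d → ℝ is twice continuously differentiable and concave, θ̂ maximizes f over a convex set Ω containing θ*, and for every θ on the segment between θ̂ and θ*, the Hessian satisfies Δᵀ H(θ) Δ ≤ −λ‖Δ‖² for all Δ orthogonal to 𝟙, with λ > 0, where Δ = θ̂ − θ* satisfies Δᵀ𝟙 = 0. Then ‖θ̂ − θ*‖ ≤ 2‖∇f(θ*)‖ / λ. -/

import Mathlib

open Set RealInnerProductSpace

/-- If `f` is `C²` and concave, `θ̂` maximizes `f` over a convex set `Ω ∋ θ*`,
`Δ = θ̂ − θ*` is orthogonal to `𝟙`, and on the segment between `θ*` and `θ̂` the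
Hessian satisfies `Δᵀ H(θ) Δ ≤ −λ‖Δ‖²` for every `Δ ⊥ 𝟙` with `λ > 0`, then
`‖θ̂ − θ*‖ ≤ 2‖∇f(θ*)‖/λ`. -/
theorem argmax_error_bound (d : ℕ)
    (f : EuclideanSpace ℝ (Fin d) → ℝ) (hf : ContDiff ℝ 2 f)
    (Ω : Set (EuclideanSpace ℝ (Fin d))) (hΩ : Convex ℝ Ω)
    (hconc : ConcaveOn ℝ Ω f)
    (θhat θstar : EuclideanSpace ℝ (Fin d))
    (hθhat : θhat ∈ Ω) (hθstar : θstar ∈ Ω)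
    (hmax : ∀ θ ∈ Ω, f θ ≤ f θhat)
    (lam : ℝ) (hlam : 0 < lam)
    (ones : EuclideanSpace ℝ (Fin d)) (hones : ones = WithLp.toLp 2 (fun _ => (1 : ℝ)))
    (horth : ⟪θhat - θstar, ones⟫ = 0)
    (hhess : ∀ θ ∈ segment ℝ θstar θhat, ∀ Δ : EuclideanSpace ℝ (Fin d),
      ⟪Δ, ones⟫ = 0 → fderiv ℝ (fderiv ℝ f) θ Δ Δ ≤ -lam * ‖Δ‖ ^ 2) :
    ‖θhat - θstar‖ ≤ 2 * ‖gradient f θstar‖ / lam := by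
  set Δ : EuclideanSpace ℝ (Fin d) := θhat - θstar with hΔ
  by_cases hΔ0 : Δ = 0
  · rw [hΔ0, norm_zero]
    positivity
  -- differentiability facts
  have hdf : Differentiable ℝ f := hf.differentiable (by norm_num)
  have hdf2 : Differentiable ℝ (fderiv ℝ f) := by
    have : ContDiff ℝ 1 (fderiv ℝ f) := hf.fderiv_right (by norm_num)
    exact this.differentiable one_ne_zero
  -- the line L t = θstar + t • Δ
  set L : ℝ → EuclideanSpace ℝ (Fin d) := fun t => θstar + t • Δ with hL
  have hLder : ∀ t : ℝ, HasDerivAt L Δ t := by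
    intro t
    have h := ((hasDerivAt_id t).smul_const Δ).const_add θstar
    rw [one_smul] at h
    exact h
  have hLseg : ∀ t ∈ Icc (0:ℝ) 1, L t ∈ segment ℝ θstar θhat := by
    intro t ht
    rw [segment_eq_image']
    exact ⟨t, ht, rfl⟩
  -- g1 t = directional derivative of f at L t in direction Δ
  set g1 : ℝ → ℝ := fun t => fderiv ℝ f (L t) Δ with hg1
  have hg1der : ∀ t : ℝ, HasDerivAt g1 (fderiv ℝ (fderiv ℝ f) (L t) Δ Δ) t := by
    intro t
    have h1 : HasDerivAt (fun t => fderiv ℝ f (L t)) (fderiv ℝ (fderiv ℝ f) (L t) Δ) t :=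
      ((hdf2 (L t)).hasFDerivAt).comp_hasDerivAt t (hLder t)
    have := h1.clm_apply (hasDerivAt_const t Δ)
    simpa using this
  -- Mean value theorem for g1 on [0,1]
  obtain ⟨c, hc, hceq⟩ := exists_hasDerivAt_eq_slope g1
      (fun t => fderiv ℝ (fderiv ℝ f) (L t) Δ Δ) (by norm_num : (0:ℝ) < 1)
      (fun t _ => (hg1der t).continuousAt.continuousWithinAt)
      (fun t _ => hg1der t)
  have hcmem : L c ∈ segment ℝ θstar θhat := hLseg c ⟨hc.1.le, hc.2.le⟩
  have hhessc : fderiv ℝ (fderiv ℝ f) (L c) Δ Δ ≤ -lam * ‖Δ‖ ^ 2 :=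
    hhess (L c) hcmem Δ horth
  -- first-order optimality at θhat : fderiv f θhat Δ ≥ 0
  have hseg : segment ℝ θhat θstar ⊆ Ω := hΩ.segment_subset hθhat hθstar
  have hcone : θstar - θhat ∈ posTangentConeAt Ω θhat :=
    sub_mem_posTangentConeAt_of_segment_subset hseg
  have hlocmax : IsLocalMaxOn f Ω θhat := (isMaxOn_iff.mpr hmax).localize
  have hfo : fderiv ℝ f θhat (θstar - θhat) ≤ 0 :=
    hlocmax.hasFDerivWithinAt_nonpos ((hdf θhat).hasFDerivAt.hasFDerivWithinAt) hcone
  have hg11 : 0 ≤ g1 1 := by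
    have hL1 : L 1 = θhat := by simp [hL, hΔ]
    have : fderiv ℝ f θhat Δ = -(fderiv ℝ f θhat (θstar - θhat)) := by
      rw [← map_neg]; congr 1; simp [hΔ]
    simp only [hg1, hL1, this]
    linarith
  -- combine: g1 0 ≥ lam * ‖Δ‖²
  have hslope : g1 1 - g1 0 ≤ -lam * ‖Δ‖ ^ 2 := by
    have : g1 1 - g1 0 = fderiv ℝ (fderiv ℝ f) (L c) Δ Δ := by
      rw [hceq]; ring
    linarith [hhessc, this.ge, this.le]
  have hg10 : lam * ‖Δ‖ ^ 2 ≤ g1 0 := by nlinarith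
  -- g1 0 = ⟪gradient f θstar, Δ⟫ ≤ ‖gradient f θstar‖ * ‖Δ‖
  have hgrad : g1 0 = ⟪gradient f θstar, Δ⟫ := by
    have h0 : L 0 = θstar := by simp [hL]
    have := (hdf θstar).hasGradientAt.hasFDerivAt
    have hfd : fderiv ℝ f θstar = (InnerProductSpace.toDual ℝ _) (gradient f θstar) :=
      this.fderiv
    show fderiv ℝ f (L 0) Δ = _
    rw [h0, hfd, InnerProductSpace.toDual_apply_apply]
  have hCS : g1 0 ≤ ‖gradient f θstar‖ * ‖Δ‖ := by
    rw [hgrad]; exact real_inner_le_norm _ _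
  have hΔpos : 0 < ‖Δ‖ := norm_pos_iff.mpr hΔ0
  have key : lam * ‖Δ‖ ≤ ‖gradient f θstar‖ := by
    have := hg10.trans hCS
    nlinarith
  rw [le_div_iff₀ hlam]
  nlinarith [norm_nonneg (gradient f θstar)]
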